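/- arXiv:math/9908171 — 4 statements merged into one kernel-verified Lean document; each statement's English description precedes it below -/
import Mathlib

section
/- In the free Z[c]-algebra A with basis {1, X}, multiplication 1·1=1, 1·X=X·1=X, X²=0, and comultiplication Δ(1)=1⊗X+X⊗1+cX⊗X, Δ(X)=X⊗X, the identity Δ∘m = (m⊗Id)∘(Id⊗Δ) holds as maps A⊗A → A⊗A (tensor products over Z[c]). -/
open TensorProduct

noncomputable section

abbrev R : Type := Polynomial ℤ
abbrev A : Type := R × R

/-- The `R`-linear map out of `A = R·1 ⊕ R·X` sending `1 ↦ p` and `X ↦ q`. -/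
def lmap {P : Type*} [AddCommGroup P] [Module R P] (p q : P) : A →ₗ[R] P :=
  (LinearMap.toSpanSingleton R P p).coprod (LinearMap.toSpanSingleton R P q)

/-- The basis element `1` of `A`. -/
def one' : A := (1, 0)

/-- The basis element `X` of `A`. -/
def Xa : A := (0, 1)

/-- Multiplication `m : A ⊗ A → A`, with `1·1 = 1`, `1·X = X·1 = X`, `X² = 0`. -/
def mul : A ⊗[R] A →ₗ[R] A :=
  TensorProduct.lift (lmap LinearMap.id (lmap Xa 0))

/-- Comultiplication `Δ(1) = 1⊗X + X⊗1 + c X⊗X`, `Δ(X) = X⊗X`. -/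
def Δ : A →ₗ[R] A ⊗[R] A :=
  lmap (one' ⊗ₜ[R] Xa + Xa ⊗ₜ[R] one' + (Polynomial.X : R) • (Xa ⊗ₜ[R] Xa)) (Xa ⊗ₜ[R] Xa)

/-- Counit `ε(1) = -c`, `ε(X) = 1`. -/
def ε : A →ₗ[R] R := lmap (-Polynomial.X) 1

/-- `Δ ∘ m = (m ⊗ Id) ∘ (Id ⊗ Δ)` as maps `A⊗A → A⊗A`. -/
theorem stmt0 :
    Δ ∘ₗ mul =
      (TensorProduct.map mul LinearMap.id) ∘ₗ
        ((TensorProduct.assoc R A A A).symm.toLinearMap ∘ₗ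
          (TensorProduct.map LinearMap.id Δ)) := by

  apply TensorProduct.ext'
  intro x y
  obtain ⟨x1, x2⟩ := x
  obtain ⟨y1, y2⟩ := y
  have hx : ((x1, x2) : A) = x1 • one' + x2 • Xa := by
    simp [one', Xa, Prod.ext_iff]
  have hy : ((y1, y2) : A) = y1 • one' + y2 • Xa := by
    simp [one', Xa, Prod.ext_iff]
  rw [hx, hy]
  simp only [LinearMap.comp_apply, tmul_add, add_tmul, smul_tmul', tmul_smul,
    map_add, map_smul, LinearEquiv.coe_coe, TensorProduct.map_tmul,
    TensorProduct.assoc_symm_tmul]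
  simp [mul, Δ, lmap, one', Xa, LinearMap.toSpanSingleton_apply, tmul_add, add_tmul,
    smul_tmul', tmul_smul, TensorProduct.smul_tmul]
end
end

section
/- In the algebra A over Z[c] defined above, the composite map m∘Δ∘m∘Δ : A → A is the zero map. -/
open TensorProduct

noncomputable section

/-- `m ∘ Δ ∘ m ∘ Δ = 0 : A → A`. -/
theorem stmt1 : mul ∘ₗ Δ ∘ₗ mul ∘ₗ Δ = 0 := by
  apply LinearMap.ext
  rintro ⟨a, b⟩
  have h : ((a, b) : A) = a • ((1,0) : A) + b • ((0,1) : A) := by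
    simp [Prod.ext_iff]
  rw [h, map_add, map_smul, map_smul]
  have h1 : (mul ∘ₗ Δ ∘ₗ mul ∘ₗ Δ) ((1,0) : A) = 0 := by
    simp [mul, Δ, lmap, one', Xa, Prod.ext_iff]
  have h2 : (mul ∘ₗ Δ ∘ₗ mul ∘ₗ Δ) ((0,1) : A) = 0 := by
    simp [mul, Δ, lmap, one', Xa, Prod.ext_iff]
  simp [h1, h2]
end
end

section
/- As an R-module, A⊗A decomposes as a direct sum (A⊗1) ⊕ Δ(A), where A⊗1 = {a⊗1 : a ∈ A} and Δ(A) is the image of the comultiplication Δ. -/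
open TensorProduct

noncomputable section

/-- Coordinate functional on `A ⊗ A` built from two functionals on `A`. -/
def φ (f g : A →ₗ[R] R) : A ⊗[R] A →ₗ[R] R :=
  (TensorProduct.lid R R).toLinearMap ∘ₗ TensorProduct.map f g

lemma φ_tmul (f g : A →ₗ[R] R) (u v : A) : φ f g (u ⊗ₜ v) = f u * g v := by
  simp [φ, smul_eq_mul]

lemma lmap_apply {P : Type*} [AddCommGroup P] [Module R P] (p q : P) (b : A) :
    lmap p q b = b.1 • p + b.2 • q := rfl

/-- `A⊗A = (A⊗1) ⊕ Δ(A)` as `R`-modules. -/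
theorem stmt5 :
    IsCompl (LinearMap.range ((TensorProduct.mk R A A).flip one'))
      (LinearMap.range Δ) := by
  constructor
  · rw [Submodule.disjoint_def]
    rintro x ⟨a, rfl⟩ ⟨b, hb⟩
    have h1 : φ (LinearMap.fst R R R) (LinearMap.snd R R R) (Δ b)
        = φ (LinearMap.fst R R R) (LinearMap.snd R R R)
          ((TensorProduct.mk R A A).flip one' a) := by rw [hb]
    have h2 : φ (LinearMap.snd R R R) (LinearMap.snd R R R) (Δ b)
        = φ (LinearMap.snd R R R) (LinearMap.snd R R R)
          ((TensorProduct.mk R A A).flip one' a) := by rw [hb]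
    simp only [Δ, lmap_apply, map_add, map_smul, TensorProduct.mk_apply,
      LinearMap.flip_apply, φ_tmul, one', Xa, LinearMap.fst_apply,
      LinearMap.snd_apply, smul_eq_mul] at h1 h2
    simp only [mul_zero, mul_one, zero_mul, one_mul, add_zero, zero_add] at h1 h2
    have hb1 : b.1 = 0 := by linear_combination h1
    have hb2 : b.2 = 0 := by linear_combination h2 - Polynomial.X * h1
    rw [← hb]
    simp [Δ, lmap_apply, hb1, hb2]
  · rw [codisjoint_iff, eq_top_iff]
    rintro z -
    have hP : ∀ a : A, a ⊗ₜ[R] one' ∈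
        LinearMap.range ((TensorProduct.mk R A A).flip one') ⊔ LinearMap.range Δ :=
      fun a => Submodule.mem_sup_left ⟨a, rfl⟩
    have hQ : ∀ a : A, Δ a ∈
        LinearMap.range ((TensorProduct.mk R A A).flip one') ⊔ LinearMap.range Δ :=
      fun a => Submodule.mem_sup_right ⟨a, rfl⟩
    have hXX : (Xa ⊗ₜ[R] Xa : A ⊗[R] A) = Δ Xa := by
      simp [Δ, lmap_apply, Xa]
    have hone : (one' ⊗ₜ[R] Xa : A ⊗[R] A)
        = Δ one' - Xa ⊗ₜ[R] one' - (Polynomial.X : R) • Δ Xa := by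
      simp [Δ, lmap_apply, one', Xa]
      abel
    have honeX : (one' ⊗ₜ[R] Xa : A ⊗[R] A) ∈
        LinearMap.range ((TensorProduct.mk R A A).flip one') ⊔ LinearMap.range Δ := by
      rw [hone]
      exact sub_mem (sub_mem (hQ one') (hP Xa)) (Submodule.smul_mem _ _ (hQ Xa))
    induction z using TensorProduct.induction_on with
    | zero => exact zero_mem _
    | add x y hx hy => exact add_mem hx hy
    | tmul a b =>
      have hab : a ⊗ₜ[R] b = b.1 • (a ⊗ₜ[R] one') + b.2 • (a ⊗ₜ[R] Xa) := by
        rw [← TensorProduct.tmul_smul, ← TensorProduct.tmul_smul,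
          ← TensorProduct.tmul_add]
        congr 1
        simp [one', Xa, Prod.ext_iff]
      have haX : a ⊗ₜ[R] Xa = a.1 • (one' ⊗ₜ[R] Xa) + a.2 • (Xa ⊗ₜ[R] Xa) := by
        rw [TensorProduct.smul_tmul', TensorProduct.smul_tmul',
          ← TensorProduct.add_tmul]
        congr 1
        simp [one', Xa, Prod.ext_iff]
      rw [hab, haX]
      refine add_mem (Submodule.smul_mem _ _ (hP a))
        (Submodule.smul_mem _ _ (add_mem (Submodule.smul_mem _ _ honeX)
          (Submodule.smul_mem _ _ (hXX ▸ hQ Xa))))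
end
end

section
/- Let M be a graded module over A = Z[c,X]/(X²). Define Δ_M: M → A⊗_R M by Δ_M(t) = X⊗t + 1⊗Xt + cX⊗Xt, m_M: A⊗_R M → M by m_M(1⊗t)=t, m_M(X⊗t)=Xt, and ι_M(t)=1⊗t. Then A⊗_R M = Δ_M(M) ⊕ ι_M(M) as A-modules. -/
open TensorProduct

noncomputable section

/-- `Δ_M : M → A ⊗ M`, `t ↦ X⊗t + 1⊗Xt + cX⊗Xt`. -/
def ΔM (M : Type*) [AddCommGroup M] [Module R M] (XM : M →ₗ[R] M) :
    M →ₗ[R] A ⊗[R] M :=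
  TensorProduct.mk R A M Xa + (TensorProduct.mk R A M one') ∘ₗ XM +
    (Polynomial.X : R) • ((TensorProduct.mk R A M Xa) ∘ₗ XM)

/-- `m_M : A ⊗ M → M`, `1⊗t ↦ t`, `X⊗t ↦ Xt`. -/
def mM (M : Type*) [AddCommGroup M] [Module R M] (XM : M →ₗ[R] M) :
    A ⊗[R] M →ₗ[R] M :=
  TensorProduct.lift (lmap LinearMap.id XM)

/-- `ι_M : M → A ⊗ M`, `t ↦ 1⊗t`. -/
def ιM (M : Type*) [AddCommGroup M] [Module R M] : M →ₗ[R] A ⊗[R] M :=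
  TensorProduct.mk R A M one'

/-- The action of `X ∈ A` on `A ⊗ M`, namely `Id_A ⊗ X_M` (since `a(x⊗y) = x⊗(ay)`). -/
def XT (M : Type*) [AddCommGroup M] [Module R M] (XM : M →ₗ[R] M) :
    A ⊗[R] M →ₗ[R] A ⊗[R] M :=
  TensorProduct.map LinearMap.id XM

/-- Auxiliary: the `X`-coordinate map `A ⊗ M → M`, `1⊗t ↦ 0`, `X⊗t ↦ t`. -/
def qM (M : Type*) [AddCommGroup M] [Module R M] : A ⊗[R] M →ₗ[R] M :=
  TensorProduct.lift (lmap 0 LinearMap.id)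

lemma lmap_one' {P : Type*} [AddCommGroup P] [Module R P] (p q : P) :
    lmap p q one' = p := by
  simp [lmap, one', LinearMap.toSpanSingleton]

lemma lmap_Xa {P : Type*} [AddCommGroup P] [Module R P] (p q : P) :
    lmap p q Xa = q := by
  simp [lmap, Xa, LinearMap.toSpanSingleton]

lemma qM_one' {M : Type*} [AddCommGroup M] [Module R M] (m : M) :
    qM M (one' ⊗ₜ[R] m) = 0 := by
  simp [qM, lmap_one']

lemma qM_Xa {M : Type*} [AddCommGroup M] [Module R M] (m : M) :
    qM M (Xa ⊗ₜ[R] m) = m := by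
  simp [qM, lmap_Xa]

lemma ΔM_apply {M : Type*} [AddCommGroup M] [Module R M] (XM : M →ₗ[R] M) (t : M) :
    ΔM M XM t = Xa ⊗ₜ[R] t + one' ⊗ₜ[R] (XM t)
      + (Polynomial.X : R) • (Xa ⊗ₜ[R] (XM t)) := rfl

/-- for a graded `A`-module `M` (an `R = ℤ[c]`-module with an `R`-linear
`X` satisfying `X² = 0`), `A ⊗_R M = Δ_M(M) ⊕ ι_M(M)` as `A`-modules: the two ranges are
complementary `R`-submodules, each stable under the `X`-action `a(x⊗y) = x⊗(ay)`. -/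
theorem stmt11 (M : Type*) [AddCommGroup M] [Module R M]
    (XM : M →ₗ[R] M) (hX : XM ∘ₗ XM = 0) :
    IsCompl (LinearMap.range (ΔM M XM)) (LinearMap.range (ιM M)) ∧
    Submodule.map (XT M XM) (LinearMap.range (ΔM M XM)) ≤ LinearMap.range (ΔM M XM) ∧
    Submodule.map (XT M XM) (LinearMap.range (ιM M)) ≤ LinearMap.range (ιM M) := by
  have hX' : ∀ m, XM (XM m) = 0 := fun m => DFunLike.congr_fun hX m
  have hXΔ : ∀ t, XT M XM (ΔM M XM t) = ΔM M XM (XM t) := by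
    intro t
    simp [XT, ΔM_apply, hX', tmul_smul]
  have hXι : ∀ t, XT M XM (ιM M t) = ιM M (XM t) := by
    intro t
    simp [XT, ιM]
  refine ⟨⟨?_, ?_⟩, ?_, ?_⟩
  · rw [Submodule.disjoint_def]
    rintro x ⟨t, rfl⟩ ⟨s, hs⟩
    have h1 : qM M (ΔM M XM t) = t + (Polynomial.X : R) • XM t := by
      simp [ΔM_apply, qM_one', qM_Xa]
    have h2 : qM M (ιM M s) = 0 := by simp [ιM, qM_one']
    have h3 : t + (Polynomial.X : R) • XM t = 0 := by
      rw [← h1, ← hs, h2]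
    have h4 : XM t = 0 := by
      have := congrArg XM h3
      simpa [hX'] using this
    have h5 : t = 0 := by simpa [h4] using h3
    simp [h5]
  · rw [codisjoint_iff, eq_top_iff]
    intro x _
    induction x using TensorProduct.induction_on with
    | zero => exact Submodule.zero_mem _
    | add x y hx hy => exact Submodule.add_mem _ (hx trivial) (hy trivial)
    | tmul a m =>
      obtain ⟨a1, a2⟩ := a
      have hsplit : ((a1, a2) : A) ⊗ₜ[R] m
          = a1 • (one' ⊗ₜ[R] m) + a2 • (Xa ⊗ₜ[R] m) := by
        have : ((a1, a2) : A) = a1 • one' + a2 • Xa := by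
          simp [one', Xa, Prod.ext_iff]
        rw [this, add_tmul, smul_tmul', smul_tmul']
      rw [hsplit]
      refine Submodule.add_mem _ (Submodule.smul_mem _ _ ?_) (Submodule.smul_mem _ _ ?_)
      · exact Submodule.mem_sup_right ⟨m, rfl⟩
      · have hkey : Xa ⊗ₜ[R] m
            = ΔM M XM (m - (Polynomial.X : R) • XM m) - ιM M (XM m) := by
          simp only [ΔM_apply, ιM, TensorProduct.mk_apply, map_sub, map_smul, hX',
            smul_zero, sub_zero, tmul_sub, tmul_smul, tmul_zero, smul_add, add_zero,
            smul_sub]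
          module
        rw [hkey]
        exact Submodule.sub_mem _ (Submodule.mem_sup_left ⟨_, rfl⟩)
          (Submodule.mem_sup_right ⟨_, rfl⟩)
  · rintro x ⟨y, ⟨t, rfl⟩, rfl⟩
    exact ⟨XM t, (hXΔ t).symm⟩
  · rintro x ⟨y, ⟨t, rfl⟩, rfl⟩
    exact ⟨XM t, (hXι t).symm⟩
end
end
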